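/- The keep probability is at most e^ε times every replacement probability, i.e. p ≤ e^ε · q_k for all k ∈ V\{t}, if and only if β ≤ ε + ln(n−1) + ln( (min_{k∈V\{t}} w_k) / (Σ_{l∈V} w_l) ). -/

import Mathlib

/-- The keep probability p of ARR is at most e^ε times every replacement
probability q_k (for k ∈ V \ {t}) if and only if
β ≤ ε + ln(n−1) + ln(min_{k∈V\{t}} w_k / Σ_{l∈V} w_l). -/
theorem stmt_2 {V : Type*} [Fintype V] [DecidableEq V]
    (t : V) (hn : 2 ≤ Fintype.card V)
    (hne : (Finset.univ.erase t).Nonempty)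
    (m : ℝ) (hm : 0 < m)
    (e Δ w : V → ℝ)
    (hΔ : ∀ k, Δ k = |e t - e k|)
    (hw : ∀ k, w k = Real.exp (-(Δ k) / m))
    (β ε : ℝ) (hε0 : 0 ≤ ε)
    (p : ℝ) (hp : p = Real.exp β / (Real.exp β + ((Fintype.card V : ℝ) - 1)))
    (q : V → ℝ)
    (hq : ∀ k, q k = ((Fintype.card V : ℝ) - 1) * (w k / ∑ l, w l) /
      (Real.exp β + ((Fintype.card V : ℝ) - 1))) :
    (∀ k ∈ Finset.univ.erase t, p ≤ Real.exp ε * q k) ↔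
      β ≤ ε + Real.log ((Fintype.card V : ℝ) - 1) +
        Real.log ((Finset.univ.erase t).inf' hne w / ∑ l, w l) := by
  have : Nonempty V := ⟨t⟩
  set c : ℝ := (Fintype.card V : ℝ) - 1 with hc
  have hc1 : (1 : ℝ) ≤ c := by
    have : (2 : ℝ) ≤ (Fintype.card V : ℝ) := by exact_mod_cast hn
    linarith
  have hcpos : 0 < c := by linarith
  have hwpos : ∀ k, 0 < w k := fun k => (hw k) ▸ Real.exp_pos _
  have hSpos : (0 : ℝ) < ∑ l, w l :=
    Finset.sum_pos (fun l _ => hwpos l) Finset.univ_nonempty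
  have hDpos : (0 : ℝ) < Real.exp β + c := by positivity
  have hmin : ∀ k ∈ Finset.univ.erase t,
      (Finset.univ.erase t).inf' hne w ≤ w k :=
    fun k hk => Finset.inf'_le _ hk
  obtain ⟨k₀, hk₀, hk₀eq⟩ := Finset.exists_mem_eq_inf' hne w
  have hminpos : 0 < (Finset.univ.erase t).inf' hne w := hk₀eq ▸ hwpos k₀
  have key : ∀ k, (p ≤ Real.exp ε * q k ↔
      Real.exp β ≤ Real.exp ε * c * (w k / ∑ l, w l)) := by
    intro k
    have heq : Real.exp ε * q k
        = Real.exp ε * c * (w k / ∑ l, w l) / (Real.exp β + c) := by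
      rw [hq k]; ring
    rw [hp, heq, div_le_div_iff₀ hDpos hDpos, mul_le_mul_iff_of_pos_right hDpos]
  have hrhs : (β ≤ ε + Real.log c +
        Real.log ((Finset.univ.erase t).inf' hne w / ∑ l, w l)) ↔
      Real.exp β ≤ Real.exp ε * c * ((Finset.univ.erase t).inf' hne w / ∑ l, w l) := by
    rw [← Real.exp_le_exp, Real.exp_add, Real.exp_add,
      Real.exp_log hcpos, Real.exp_log (div_pos hminpos hSpos)]
  rw [hrhs]
  constructor
  · intro h
    have := (key k₀).mp (h k₀ hk₀)
    rw [hk₀eq]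
    exact this
  · intro h k hk
    refine (key k).mpr (h.trans ?_)
    gcongr
    exact hmin k hk
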